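/- arXiv:1810.12935 — 2 statements merged into one kernel-verified Lean document; each statement's English description precedes it below -/
import Mathlib

section
/- Let m ≥ 2 be even, let λ = e^{2πi/m} (a primitive m-th root of unity), and let i be a positive integer with gcd(i, m) = 1. Let A = ℂ⟨u,v,t⟩/(u·v − v·u, t·u − v·t, t·v − λ^i·u·t). Let τ : A → A be the ℂ-algebra endomorphism determined by τ(u) = u, τ(v) = v, τ(t) = −t. Let S₊, S₋ : A → A be any ℂ-linear maps satisfying, for all nonnegative integers p, q, r: S₊(u^p·v^q·t^{2r}) = u^q·v^p·t^{2r} and S₋(u^p·v^q·t^{2r}) = λ^{i(p−q)}·u^q·v^p·t^{2r} (where λ^{i(p−q)} is the integer power of λ, possibly with negative exponent). Then the set { F ∈ A : τ(F) = F, S₊(F) = F, S₋(F) = F } equals the ℂ-subalgebra of A generated by u·v, u^m + v^m, and t². -/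
/-! Theorem 6.9 of Ferraro–Kirkman–Moore–Won (case `A⁻_{1,ε}`): the fixed ring of
the inner-faithful action of Masuoka's Hopf algebra `𝓐_{4m}`, `m` even, on the Ore
extension `A = ℂ[u,v][t;σ]` with `σ(u) = v`, `σ(v) = λ^i u`, is generated by
`uv`, `u^m + v^m` and `t²`. -/

noncomputable section

open FreeAlgebra

/-- The relations `uv = vu`, `tu = vt`, `tv = μ·ut` on `ℂ⟨u,v,t⟩`, i.e. the quotient
by the two-sided ideal generated by `uv - vu`, `tu - vt` and `tv - μ·ut`
(here `0 ↦ u`, `1 ↦ v`, `2 ↦ t` and `μ = λ^i`). -/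
inductive Stmt18.Rel (μ : ℂ) : FreeAlgebra ℂ (Fin 3) → FreeAlgebra ℂ (Fin 3) → Prop
  | comm : Stmt18.Rel μ (ι ℂ 0 * ι ℂ 1) (ι ℂ 1 * ι ℂ 0)
  | tu : Stmt18.Rel μ (ι ℂ 2 * ι ℂ 0) (ι ℂ 1 * ι ℂ 2)
  | tv : Stmt18.Rel μ (ι ℂ 2 * ι ℂ 1) (μ • (ι ℂ 0 * ι ℂ 2))

/-- `A = ℂ⟨u,v,t⟩/(uv - vu, tu - vt, tv - λ^i ut)`. -/
abbrev Stmt18.A (μ : ℂ) := RingQuot (Stmt18.Rel μ)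

def Stmt18.u (μ : ℂ) : Stmt18.A μ := RingQuot.mkAlgHom ℂ (Stmt18.Rel μ) (ι ℂ 0)
def Stmt18.v (μ : ℂ) : Stmt18.A μ := RingQuot.mkAlgHom ℂ (Stmt18.Rel μ) (ι ℂ 1)
def Stmt18.t (μ : ℂ) : Stmt18.A μ := RingQuot.mkAlgHom ℂ (Stmt18.Rel μ) (ι ℂ 2)

namespace Stmt18
variable (μ : ℂ)

lemma rel_comm : u μ * v μ = v μ * u μ := by
  simpa [u, v, map_mul] using RingQuot.mkAlgHom_rel ℂ (Stmt18.Rel.comm (μ := μ))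

lemma rel_tu : t μ * u μ = v μ * t μ := by
  simpa [u, v, t, map_mul] using RingQuot.mkAlgHom_rel ℂ (Stmt18.Rel.tu (μ := μ))

lemma rel_tv : t μ * v μ = μ • (u μ * t μ) := by
  simpa [u, v, t, map_mul, map_smul] using RingQuot.mkAlgHom_rel ℂ (Stmt18.Rel.tv (μ := μ))

lemma commute_uv : Commute (u μ) (v μ) := rel_comm μ

/-- left-mult formulas -/
lemma v_mul_upow (p : ℕ) : v μ * u μ ^ p = u μ ^ p * v μ :=
  ((commute_uv μ).symm.pow_right p).eq

lemma t_mul_upow (p : ℕ) : t μ * u μ ^ p = v μ ^ p * t μ := by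
  induction p with
  | zero => simp
  | succ p ih =>
    rw [pow_succ, ← mul_assoc, ih, mul_assoc, rel_tu, pow_succ, mul_assoc]

lemma t_mul_vpow (q : ℕ) : t μ * v μ ^ q = μ ^ q • (u μ ^ q * t μ) := by
  induction q with
  | zero => simp
  | succ q ih =>
    rw [pow_succ, ← mul_assoc, ih, smul_mul_assoc, mul_assoc, rel_tv]
    simp only [mul_smul_comm, smul_smul, mul_assoc, pow_succ]

/-- `t² x = μ • (x t²)` consequences -/
lemma t2_mul_upow (p : ℕ) : t μ ^ 2 * u μ ^ p = μ ^ p • (u μ ^ p * t μ ^ 2) := by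
  rw [pow_two, mul_assoc, t_mul_upow, ← mul_assoc, t_mul_vpow, smul_mul_assoc,
    mul_assoc, ← pow_two]

lemma t2_mul_vpow (q : ℕ) : t μ ^ 2 * v μ ^ q = μ ^ q • (v μ ^ q * t μ ^ 2) := by
  rw [pow_two, mul_assoc, t_mul_vpow, mul_smul_comm, ← mul_assoc, t_mul_upow]
  simp only [smul_mul_assoc, mul_assoc, ← pow_two]

lemma t2r_mul_upow (r p : ℕ) : t μ ^ (2 * r) * u μ ^ p = μ ^ (r * p) • (u μ ^ p * t μ ^ (2 * r)) := by
  induction r with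
  | zero => simp
  | succ r ih =>
    have : t μ ^ (2 * (r + 1)) = t μ ^ (2 * r) * t μ ^ 2 := by rw [← pow_add]; ring_nf
    rw [this, mul_assoc, t2_mul_upow, mul_smul_comm, ← mul_assoc, ih, smul_mul_assoc, smul_smul]
    simp only [mul_assoc, ← pow_add]
    ring_nf

lemma t2r_mul_vpow (r q : ℕ) : t μ ^ (2 * r) * v μ ^ q = μ ^ (r * q) • (v μ ^ q * t μ ^ (2 * r)) := by
  induction r with
  | zero => simp
  | succ r ih =>
    have : t μ ^ (2 * (r + 1)) = t μ ^ (2 * r) * t μ ^ 2 := by rw [← pow_add]; ring_nf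
    rw [this, mul_assoc, t2_mul_vpow, mul_smul_comm, ← mul_assoc, ih, smul_mul_assoc, smul_smul]
    simp only [mul_assoc, ← pow_add]
    ring_nf

def mono (s : ℕ × ℕ × ℕ) : A μ := u μ ^ s.1 * v μ ^ s.2.1 * t μ ^ s.2.2

lemma mono_mul (p q r p' q' r' : ℕ) :
    mono μ (p, q, 2 * r) * mono μ (p', q', 2 * r') =
      μ ^ (r * (p' + q')) • mono μ (p + p', q + q', 2 * (r + r')) := by
  unfold mono
  simp only
  calc u μ ^ p * v μ ^ q * t μ ^ (2*r) * (u μ ^ p' * v μ ^ q' * t μ ^ (2*r'))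
      = u μ ^ p * v μ ^ q * ((t μ ^ (2*r) * u μ ^ p') * v μ ^ q' * t μ ^ (2*r')) := by
        simp only [mul_assoc]
    _ = u μ ^ p * v μ ^ q * ((μ ^ (r*p') • (u μ ^ p' * t μ ^ (2*r))) * v μ ^ q' * t μ ^ (2*r')) := by
        rw [t2r_mul_upow]
    _ = μ ^ (r*p') • (u μ ^ p * v μ ^ q * (u μ ^ p' * (t μ ^ (2*r) * v μ ^ q') * t μ ^ (2*r'))) := by
        simp only [smul_mul_assoc, mul_smul_comm, mul_assoc]
    _ = μ ^ (r*p') • (u μ ^ p * v μ ^ q * (u μ ^ p' * (μ ^ (r*q') • (v μ ^ q' * t μ ^ (2*r))) * t μ ^ (2*r'))) := by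
        rw [t2r_mul_vpow]
    _ = μ ^ (r * (p'+q')) • (u μ ^ p * v μ ^ q * (u μ ^ p' * (v μ ^ q' * (t μ ^ (2*r) * t μ ^ (2*r'))))) := by
        simp only [smul_mul_assoc, mul_smul_comm, mul_assoc, smul_smul, ← pow_add]
        ring_nf
    _ = μ ^ (r * (p'+q')) • (u μ ^ (p+p') * v μ ^ (q+q') * t μ ^ (2*(r+r'))) := by
        congr 1
        have hv : v μ ^ q * u μ ^ p' = u μ ^ p' * v μ ^ q :=
          ((commute_uv μ).symm.pow_pow q p').eq
        calc u μ ^ p * v μ ^ q * (u μ ^ p' * (v μ ^ q' * (t μ ^ (2*r) * t μ ^ (2*r'))))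
            = u μ ^ p * (v μ ^ q * u μ ^ p') * (v μ ^ q' * (t μ ^ (2*r) * t μ ^ (2*r'))) := by
              simp only [mul_assoc]
          _ = u μ ^ (p+p') * v μ ^ (q+q') * t μ ^ (2*(r+r')) := by
              rw [hv]
              simp only [pow_add, pow_mul, mul_assoc]


/-! ## The regular representation on normal-form monomials -/

abbrev N := (ℕ × ℕ × ℕ) →₀ ℂ

def sw (s : ℕ × ℕ × ℕ) : ℕ × ℕ × ℕ := (s.2.1, s.1, s.2.2)

@[simp] lemma sw_sw (s : ℕ × ℕ × ℕ) : sw (sw s) = s := rfl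

def Uop : Module.End ℂ N := Finsupp.lsum ℂ fun s => Finsupp.lsingle (s.1 + 1, s.2.1, s.2.2)
def Vop : Module.End ℂ N := Finsupp.lsum ℂ fun s => Finsupp.lsingle (s.1, s.2.1 + 1, s.2.2)
def Top (μ : ℂ) : Module.End ℂ N :=
  Finsupp.lsum ℂ fun s => μ ^ s.2.1 • Finsupp.lsingle (s.2.1, s.1, s.2.2 + 1)

@[simp] lemma Uop_single (s : ℕ × ℕ × ℕ) (c : ℂ) :
    Uop (Finsupp.single s c) = Finsupp.single (s.1 + 1, s.2.1, s.2.2) c := by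
  simp [Uop]

@[simp] lemma Vop_single (s : ℕ × ℕ × ℕ) (c : ℂ) :
    Vop (Finsupp.single s c) = Finsupp.single (s.1, s.2.1 + 1, s.2.2) c := by
  simp [Vop]

@[simp] lemma Top_single (μ : ℂ) (s : ℕ × ℕ × ℕ) (c : ℂ) :
    Top μ (Finsupp.single s c) = μ ^ s.2.1 • Finsupp.single (s.2.1, s.1, s.2.2 + 1) c := by
  simp [Top]

def φ0 (μ : ℂ) : FreeAlgebra ℂ (Fin 3) →ₐ[ℂ] Module.End ℂ N :=
  FreeAlgebra.lift ℂ ![Uop, Vop, Top μ]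

@[simp] lemma φ0_ι0 (μ : ℂ) : φ0 μ (ι ℂ 0) = Uop := by
  simp [φ0]

@[simp] lemma φ0_ι1 (μ : ℂ) : φ0 μ (ι ℂ 1) = Vop := by
  simp [φ0]

@[simp] lemma φ0_ι2 (μ : ℂ) : φ0 μ (ι ℂ 2) = Top μ := by
  simp [φ0]

lemma φ0_rel {μ : ℂ} {a b : FreeAlgebra ℂ (Fin 3)} (h : Stmt18.Rel μ a b) :
    φ0 μ a = φ0 μ b := by
  cases h with
  | comm =>
    rw [map_mul, map_mul, φ0_ι0, φ0_ι1]
    apply Finsupp.lhom_ext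
    intro s c
    simp only [Module.End.mul_apply, Uop_single, Vop_single]
  | tu =>
    rw [map_mul, map_mul, φ0_ι2, φ0_ι0, φ0_ι1]
    apply Finsupp.lhom_ext
    intro s c
    simp only [Module.End.mul_apply, Uop_single, Vop_single, Top_single, map_smul]
  | tv =>
    rw [map_mul, map_smul, map_mul, φ0_ι2, φ0_ι0, φ0_ι1]
    apply Finsupp.lhom_ext
    intro s c
    simp only [Module.End.mul_apply, LinearMap.smul_apply, Uop_single, Vop_single, Top_single,
      map_smul, smul_smul, pow_succ]
    rw [mul_comm]

def φ (μ : ℂ) : A μ →ₐ[ℂ] Module.End ℂ N :=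
  RingQuot.liftAlgHom ℂ ⟨φ0 μ, fun _ _ h => φ0_rel h⟩

@[simp] lemma φ_u (μ : ℂ) : φ μ (u μ) = Uop := by
  rw [φ, u, RingQuot.liftAlgHom_mkAlgHom_apply, φ0_ι0]

@[simp] lemma φ_v (μ : ℂ) : φ μ (v μ) = Vop := by
  rw [φ, v, RingQuot.liftAlgHom_mkAlgHom_apply, φ0_ι1]

@[simp] lemma φ_t (μ : ℂ) : φ μ (t μ) = Top μ := by
  rw [φ, t, RingQuot.liftAlgHom_mkAlgHom_apply, φ0_ι2]

def e000 : N := Finsupp.single (0, 0, 0) 1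

def ψ (μ : ℂ) : A μ →ₗ[ℂ] N :=
  (LinearMap.applyₗ e000).comp (φ μ).toLinearMap

lemma ψ_apply (μ : ℂ) (a : A μ) : ψ μ a = φ μ a e000 := rfl

lemma Uop_pow (p : ℕ) (s : ℕ × ℕ × ℕ) (c : ℂ) :
    (Uop ^ p) (Finsupp.single s c) = Finsupp.single (s.1 + p, s.2.1, s.2.2) c := by
  induction p with
  | zero => simp
  | succ p ih =>
    rw [pow_succ', Module.End.mul_apply, ih, Uop_single, ← add_assoc]

lemma Vop_pow (q : ℕ) (s : ℕ × ℕ × ℕ) (c : ℂ) :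
    (Vop ^ q) (Finsupp.single s c) = Finsupp.single (s.1, s.2.1 + q, s.2.2) c := by
  induction q with
  | zero => simp
  | succ q ih =>
    rw [pow_succ', Module.End.mul_apply, ih, Vop_single, ← add_assoc]

lemma Top_pow (μ : ℂ) (k c2 : ℕ) :
    ((Top μ) ^ k) (Finsupp.single ((0:ℕ), (0:ℕ), c2) 1) = Finsupp.single (0, 0, c2 + k) 1 := by
  induction k with
  | zero => simp
  | succ k ih =>
    rw [pow_succ', Module.End.mul_apply, ih, Top_single]
    simp [← add_assoc]

lemma ψ_mono (μ : ℂ) (s : ℕ × ℕ × ℕ) : ψ μ (mono μ s) = Finsupp.single s 1 := by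
  obtain ⟨p, q, k⟩ := s
  rw [ψ_apply, mono]
  simp only [map_mul, map_pow, φ_u, φ_v, φ_t, Module.End.mul_apply, e000]
  rw [Top_pow, Vop_pow, Uop_pow]
  simp


def θ (μ : ℂ) : N →ₗ[ℂ] A μ :=
  Finsupp.lsum ℂ fun s => LinearMap.toSpanSingleton ℂ (A μ) (mono μ s)

@[simp] lemma θ_single (μ : ℂ) (s : ℕ × ℕ × ℕ) (c : ℂ) :
    θ μ (Finsupp.single s c) = c • mono μ s := by
  simp [θ, LinearMap.toSpanSingleton_apply]

lemma θ_apply (μ : ℂ) (f : N) : θ μ f = f.sum fun s c => c • mono μ s := by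
  rw [θ, Finsupp.lsum_apply]
  rfl

/-- left multiplication formulas on monomials -/
lemma u_mul_mono (μ : ℂ) (s : ℕ × ℕ × ℕ) :
    u μ * mono μ s = mono μ (s.1 + 1, s.2.1, s.2.2) := by
  rw [mono, mono, ← mul_assoc, ← mul_assoc, ← pow_succ']

lemma v_mul_mono (μ : ℂ) (s : ℕ × ℕ × ℕ) :
    v μ * mono μ s = mono μ (s.1, s.2.1 + 1, s.2.2) := by
  rw [mono, mono, ← mul_assoc, ← mul_assoc, v_mul_upow, mul_assoc (u μ ^ s.1), ← pow_succ']

lemma t_mul_mono (μ : ℂ) (s : ℕ × ℕ × ℕ) :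
    t μ * mono μ s = μ ^ s.2.1 • mono μ (s.2.1, s.1, s.2.2 + 1) := by
  obtain ⟨p, q, k⟩ := s
  rw [mono]
  simp only
  calc t μ * (u μ ^ p * v μ ^ q * t μ ^ k)
      = (t μ * u μ ^ p) * v μ ^ q * t μ ^ k := by simp only [mul_assoc]
    _ = v μ ^ p * (t μ * v μ ^ q) * t μ ^ k := by rw [t_mul_upow]; simp only [mul_assoc]
    _ = μ ^ q • (v μ ^ p * (u μ ^ q * t μ) * t μ ^ k) := by
        rw [t_mul_vpow]; simp only [mul_smul_comm, smul_mul_assoc]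
    _ = μ ^ q • (u μ ^ q * v μ ^ p * t μ ^ (k + 1)) := by
        congr 1
        calc v μ ^ p * (u μ ^ q * t μ) * t μ ^ k
            = (v μ ^ p * u μ ^ q) * (t μ * t μ ^ k) := by simp only [mul_assoc]
          _ = u μ ^ q * v μ ^ p * t μ ^ (k + 1) := by
              rw [((commute_uv μ).pow_pow q p).symm.eq, ← pow_succ']

/-- the monomials span `A μ` -/
lemma span_mono_top (μ : ℂ) :
    Submodule.span ℂ (Set.range (mono μ)) = ⊤ := by
  set M := Submodule.span ℂ (Set.range (mono μ)) with hM
  have h1 : (1 : A μ) ∈ M := by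
    apply Submodule.subset_span
    exact ⟨(0,0,0), by simp [mono]⟩
  have hmul : ∀ a : A μ, ∀ x ∈ M, a * x ∈ M := by
    have key : ∀ y : FreeAlgebra ℂ (Fin 3),
        ∀ x ∈ M, (RingQuot.mkAlgHom ℂ (Stmt18.Rel μ)) y * x ∈ M := by
      intro y
      induction y using FreeAlgebra.induction with
      | grade0 c =>
        intro x hx
        rw [AlgHom.commutes, ← Algebra.smul_def]
        exact M.smul_mem c hx
      | grade1 i =>
        have hgen : ∀ w : A μ, (w = u μ ∨ w = v μ ∨ w = t μ) → ∀ x ∈ M, w * x ∈ M := by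
          rintro w hw x hx
          induction hx using Submodule.span_induction with
          | mem z hz =>
            obtain ⟨s, rfl⟩ := hz
            rcases hw with rfl | rfl | rfl
            · rw [u_mul_mono]; exact Submodule.subset_span ⟨_, rfl⟩
            · rw [v_mul_mono]; exact Submodule.subset_span ⟨_, rfl⟩
            · rw [t_mul_mono]
              exact M.smul_mem _ (Submodule.subset_span ⟨_, rfl⟩)
          | zero => simp
          | add a b _ _ ha hb => rw [mul_add]; exact M.add_mem ha hb
          | smul c a _ ha => rw [mul_smul_comm]; exact M.smul_mem c ha
        fin_cases i
        · exact hgen _ (Or.inl rfl)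
        · exact hgen _ (Or.inr (Or.inl rfl))
        · exact hgen _ (Or.inr (Or.inr rfl))
      | mul a b ha hb =>
        intro x hx
        rw [map_mul, mul_assoc]
        exact ha _ (hb x hx)
      | add a b ha hb =>
        intro x hx
        rw [map_add, add_mul]
        exact M.add_mem (ha x hx) (hb x hx)
    intro a x hx
    obtain ⟨y, rfl⟩ := RingQuot.mkAlgHom_surjective ℂ (Stmt18.Rel μ) a
    exact key y x hx
  rw [eq_top_iff]
  intro a _
  simpa using hmul a 1 h1

lemma θ_ψ (μ : ℂ) : (θ μ).comp (ψ μ) = LinearMap.id := by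
  apply LinearMap.ext_on (span_mono_top μ)
  rintro x ⟨s, rfl⟩
  simp [ψ_mono]

lemma θ_ψ_apply (μ : ℂ) (a : A μ) : θ μ (ψ μ a) = a := by
  have := congrArg (fun g => g a) (θ_ψ μ)
  simpa using this


/-! ## coefficient extraction helpers -/

lemma sum_single_eval (f : N) (g : (ℕ × ℕ × ℕ) → ℂ) (s0 : ℕ × ℕ × ℕ) :
    (f.sum fun s c => (g s * c) • Finsupp.single s (1:ℂ)) s0 = g s0 * f s0 := by
  rw [Finsupp.sum_apply]
  rw [Finsupp.sum_eq_single s0 (fun b _ hne => by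
    simp [Finsupp.single_apply, hne]) (fun _ => by simp)]
  simp [Finsupp.single_apply]

lemma sum_single_eval_sw (f : N) (g : (ℕ × ℕ × ℕ) → ℂ) (s0 : ℕ × ℕ × ℕ) :
    (f.sum fun s c => (g s * c) • Finsupp.single (sw s) (1:ℂ)) s0 = g (sw s0) * f (sw s0) := by
  rw [Finsupp.sum_apply]
  rw [Finsupp.sum_eq_single (sw s0) (fun b _ hne => by
    have : sw b ≠ s0 := fun h => hne (by rw [← sw_sw b, h])
    simp [Finsupp.single_apply, this]) (fun _ => by simp)]
  simp [Finsupp.single_apply]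

/-! ## root of unity facts -/

section lam
variable {m : ℕ} (hm : 2 ≤ m) {lam : ℂ}
  (hlam : lam = Complex.exp (2 * Real.pi * Complex.I / m))

include hm hlam

omit hm hlam in
lemma two_pi_I_ne_zero' : (2 * Real.pi * Complex.I : ℂ) ≠ 0 := by
  simp [Real.pi_ne_zero, Complex.I_ne_zero, Complex.ofReal_ne_zero]

lemma lam_zpow_eq_one_iff (n : ℤ) : lam ^ n = 1 ↔ (m : ℤ) ∣ n := by
  have hm0 : (m : ℂ) ≠ 0 := by
    simp only [ne_eq, Nat.cast_eq_zero]
    omega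
  have h2pi : (2 * Real.pi * Complex.I : ℂ) ≠ 0 := two_pi_I_ne_zero'
  have key : lam ^ n = Complex.exp (n * (2 * Real.pi * Complex.I / m)) := by
    rw [hlam, ← Complex.exp_int_mul]
  rw [key, Complex.exp_eq_one_iff]
  constructor
  · rintro ⟨k, hk⟩
    have h2 : (n : ℂ) * (2 * Real.pi * Complex.I) = ((m : ℂ) * k) * (2 * Real.pi * Complex.I) := by
      field_simp at hk
      linear_combination (2 * Real.pi * Complex.I) * hk
    have h3 : (n : ℂ) = (m : ℂ) * k := mul_right_cancel₀ h2pi h2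
    exact ⟨k, by exact_mod_cast h3⟩
  · rintro ⟨k, rfl⟩
    refine ⟨k, ?_⟩
    push_cast
    field_simp

lemma lam_pow_m_eq_one : lam ^ (m : ℤ) = 1 :=
  (lam_zpow_eq_one_iff hm hlam m).2 dvd_rfl

end lam


/-! ## the symmetric pair monomials and the adjoin -/

def Good (m : ℕ) (s : ℕ × ℕ × ℕ) : Prop :=
  Even s.2.2 ∧ (m : ℤ) ∣ (s.1 : ℤ) - (s.2.1 : ℤ)

def pairA (μ : ℂ) (s : ℕ × ℕ × ℕ) : A μ := mono μ s + mono μ (sw s)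

lemma pairA_sw (μ : ℂ) (s : ℕ × ℕ × ℕ) : pairA μ (sw s) = pairA μ s := by
  rw [pairA, pairA, sw_sw, add_comm]

def Bset (μ : ℂ) (m : ℕ) : Set (A μ) := {x | ∃ s, Good m s ∧ x = pairA μ s}

section adjoin
variable (μ : ℂ) (m : ℕ)

abbrev Adj : Subalgebra ℂ (A μ) :=
  Algebra.adjoin ℂ ({u μ * v μ, u μ ^ m + v μ ^ m, t μ ^ 2} : Set (A μ))

lemma uv_mem : u μ * v μ ∈ Adj μ m :=
  Algebra.subset_adjoin (by simp)

lemma umvm_mem : u μ ^ m + v μ ^ m ∈ Adj μ m :=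
  Algebra.subset_adjoin (by simp)

lemma t2_mem : t μ ^ 2 ∈ Adj μ m :=
  Algebra.subset_adjoin (by simp)

lemma uvpow_mem (q : ℕ) : u μ ^ q * v μ ^ q ∈ Adj μ m := by
  rw [← (commute_uv μ).mul_pow]
  exact pow_mem (uv_mem μ m) q

lemma t2r_mem (r : ℕ) : t μ ^ (2 * r) ∈ Adj μ m := by
  rw [pow_mul]
  exact pow_mem (t2_mem μ m) r

lemma sumpow_recurrence (a : ℕ) :
    u μ ^ (a + 2 * m) + v μ ^ (a + 2 * m) =
      (u μ ^ m + v μ ^ m) * (u μ ^ (a + m) + v μ ^ (a + m)) -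
        (u μ ^ m * v μ ^ m) * (u μ ^ a + v μ ^ a) := by
  have huv : ∀ b c : ℕ, v μ ^ b * u μ ^ c = u μ ^ c * v μ ^ b :=
    fun b c => ((commute_uv μ).symm.pow_pow b c).eq
  rw [mul_add, mul_add, add_mul, add_mul]
  rw [← pow_add, ← pow_add, huv, mul_assoc, huv, ← mul_assoc, ← pow_add, mul_assoc, ← pow_add]
  abel_nf
  simp [smul_eq_mul]

lemma sumpow_mem (j : ℕ) : u μ ^ (j * m) + v μ ^ (j * m) ∈ Adj μ m := by
  induction j using Nat.strong_induction_on with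
  | _ j ih =>
    match j with
    | 0 =>
      simp only [Nat.zero_mul, pow_zero]
      exact add_mem (one_mem _) (one_mem _)
    | 1 =>
      simp only [Nat.one_mul]
      exact umvm_mem μ m
    | (j + 2) =>
      have h1 := ih (j + 1) (by omega)
      have h0 := ih j (by omega)
      have e1 : (j + 2) * m = j * m + 2 * m := by ring
      have e2 : (j + 1) * m = j * m + m := by ring
      rw [e1, sumpow_recurrence]
      rw [e2] at h1
      exact sub_mem (mul_mem (umvm_mem μ m) h1) (mul_mem (uvpow_mem μ m m) h0)

lemma pair_mem_aux (hm : 0 < m) {s : ℕ × ℕ × ℕ} (hs : Good m s) (hle : s.2.1 ≤ s.1) :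
    pairA μ s ∈ Adj μ m := by
  obtain ⟨p, q, k⟩ := s
  obtain ⟨⟨r, hr⟩, hdvd⟩ := hs
  simp only at hle hr hdvd ⊢
  obtain ⟨c, hc⟩ := hdvd
  have hc0 : 0 ≤ c := by nlinarith [hc, hle, Int.ofNat_le.2 hle]
  lift c to ℕ using hc0 with j
  have hp : p = q + j * m := by
    have h2 : (p : ℤ) = q + j * m := by linear_combination hc
    exact_mod_cast h2
  have hk : k = 2 * r := by omega
  subst hp hk
  have key : pairA μ (q + j * m, q, 2 * r) =
      (u μ ^ q * v μ ^ q) * (u μ ^ (j * m) + v μ ^ (j * m)) * t μ ^ (2 * r) := by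
    have huv : ∀ b c : ℕ, v μ ^ b * u μ ^ c = u μ ^ c * v μ ^ b :=
      fun b c => ((commute_uv μ).symm.pow_pow b c).eq
    rw [pairA, sw, mono, mono]
    simp only
    rw [mul_add, add_mul]
    congr 1
    · calc u μ ^ (q + j*m) * v μ ^ q * t μ ^ (2*r)
          = u μ ^ q * (u μ ^ (j*m) * v μ ^ q) * t μ ^ (2*r) := by
            rw [pow_add]; simp only [mul_assoc]
        _ = u μ ^ q * (v μ ^ q * u μ ^ (j*m)) * t μ ^ (2*r) := by rw [← huv]
        _ = u μ ^ q * v μ ^ q * u μ ^ (j*m) * t μ ^ (2*r) := by simp only [mul_assoc]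
    · rw [pow_add]
      simp only [mul_assoc]
  rw [key]
  exact mul_mem (mul_mem (uvpow_mem μ m q) (sumpow_mem μ m j)) (t2r_mem μ m r)

lemma pair_mem_adjoin (hm : 0 < m) {s : ℕ × ℕ × ℕ} (hs : Good m s) :
    pairA μ s ∈ Adj μ m := by
  rcases le_total s.2.1 s.1 with h | h
  · exact pair_mem_aux μ m hm hs h
  · rw [← pairA_sw]
    refine pair_mem_aux μ m hm ⟨hs.1, ?_⟩ h
    rw [show ((sw s).1 : ℤ) - ((sw s).2.1 : ℤ) = -(((s.1 : ℤ)) - (s.2.1 : ℤ)) from by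
      simp [sw]]
    exact (hs.2).neg_right

end adjoin


lemma mono_def (μ : ℂ) (p q k : ℕ) : mono μ (p, q, k) = u μ ^ p * v μ ^ q * t μ ^ k := rfl

lemma pairA_mul (μ : ℂ) (p q r p' q' r' : ℕ) :
    pairA μ (p, q, 2*r) * pairA μ (p', q', 2*r') =
      μ ^ (r * (p' + q')) •
        (pairA μ (p+p', q+q', 2*(r+r')) + pairA μ (p+q', q+p', 2*(r+r'))) := by
  simp only [pairA, sw]
  rw [add_mul, mul_add, mul_add, mono_mul, mono_mul, mono_mul, mono_mul]
  rw [show r * (q' + p') = r * (p' + q') from by ring]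
  simp only [smul_add]
  abel

end Stmt18

open Stmt18 in
theorem stmt_18 (m : ℕ) (hm : 2 ≤ m) (heven : Even m) (lam : ℂ)
    (hlam : lam = Complex.exp (2 * Real.pi * Complex.I / m))
    (i : ℕ) (hipos : 1 ≤ i) (hcop : Nat.gcd i m = 1)
    (μ : ℂ) (hμ : μ = lam ^ i)
    (τ : A μ →ₐ[ℂ] A μ)
    (hτu : τ (u μ) = u μ) (hτv : τ (v μ) = v μ) (hτt : τ (t μ) = -t μ)
    (Sp Sm : A μ →ₗ[ℂ] A μ)
    (hSp : ∀ p q r : ℕ,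
      Sp (u μ ^ p * v μ ^ q * t μ ^ (2 * r)) = u μ ^ q * v μ ^ p * t μ ^ (2 * r))
    (hSm : ∀ p q r : ℕ,
      Sm (u μ ^ p * v μ ^ q * t μ ^ (2 * r)) =
        lam ^ ((i : ℤ) * ((p : ℤ) - (q : ℤ))) • (u μ ^ q * v μ ^ p * t μ ^ (2 * r))) :
    {F : A μ | τ F = F ∧ Sp F = F ∧ Sm F = F} =
      (Algebra.adjoin ℂ
        ({u μ * v μ, u μ ^ m + v μ ^ m, t μ ^ 2} : Set (A μ)) : Set (A μ)) := by
  have hm0 : 0 < m := by omega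
  have hlam1 : ∀ n : ℤ, lam ^ n = 1 ↔ (m : ℤ) ∣ n := fun n => lam_zpow_eq_one_iff hm hlam n
  have hlamdvd : ∀ z : ℤ, (m : ℤ) ∣ z → lam ^ ((i : ℤ) * z) = 1 := fun z hz =>
    (hlam1 _).2 (Dvd.dvd.mul_left hz i)
  -- τ on monomials
  have τ_mono : ∀ s : ℕ × ℕ × ℕ, τ (mono μ s) = ((-1 : ℂ)) ^ s.2.2 • mono μ s := by
    rintro ⟨p, q, k⟩
    rw [mono_def, map_mul, map_mul, map_pow, map_pow, map_pow, hτu, hτv, hτt]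
    rcases Nat.even_or_odd k with he | ho
    · rw [he.neg_one_pow, one_smul, he.neg_pow (t μ)]
    · rw [ho.neg_one_pow, ho.neg_pow (t μ), mul_neg]
      exact (neg_one_smul ℂ _).symm
  -- Sp, Sm on even monomials
  have Sp_mono : ∀ p q r : ℕ, Sp (mono μ (p, q, 2*r)) = mono μ (q, p, 2*r) := by
    intro p q r
    rw [mono_def, mono_def]
    exact hSp p q r
  have Sm_mono : ∀ p q r : ℕ, Sm (mono μ (p, q, 2*r)) =
      lam ^ ((i : ℤ) * ((p : ℤ) - (q : ℤ))) • mono μ (q, p, 2*r) := by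
    intro p q r
    rw [mono_def, mono_def]
    exact hSm p q r
  -- pairs with Good index are fixed
  have pair_fixed : ∀ s : ℕ × ℕ × ℕ, Good m s →
      τ (pairA μ s) = pairA μ s ∧ Sp (pairA μ s) = pairA μ s ∧ Sm (pairA μ s) = pairA μ s := by
    rintro ⟨p, q, k⟩ ⟨hk, hdvd⟩
    obtain ⟨r, hr⟩ := hk
    simp only at hr
    have hk2 : k = 2 * r := by omega
    subst hk2
    simp only at hdvd
    refine ⟨?_, ?_, ?_⟩
    · rw [pairA, map_add, τ_mono, τ_mono]
      have : Even (((p,q,2*r) : ℕ × ℕ × ℕ).2.2) := ⟨r, by show 2*r = r + r; ring⟩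
      rw [this.neg_one_pow]
      simp [sw]
    · rw [pairA, map_add]
      simp only [sw]
      rw [Sp_mono, Sp_mono, add_comm]
    · rw [pairA, map_add]
      simp only [sw]
      rw [Sm_mono, Sm_mono]
      rw [hlamdvd _ hdvd, hlamdvd _ (by simpa using hdvd.neg_right : (m:ℤ) ∣ (q:ℤ) - (p:ℤ))]
      simp only [one_smul]
      rw [add_comm]
  -- the fixed set as a submodule
  set K : Submodule ℂ (A μ) :=
    (LinearMap.eqLocus (τ.toLinearMap) LinearMap.id) ⊓
      (LinearMap.eqLocus Sp LinearMap.id) ⊓ (LinearMap.eqLocus Sm LinearMap.id) with hK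
  have memK : ∀ x : A μ, x ∈ K ↔ (τ x = x ∧ Sp x = x ∧ Sm x = x) := by
    intro x
    simp only [hK, Submodule.mem_inf, LinearMap.mem_eqLocus, AlgHom.toLinearMap_apply,
      LinearMap.id_apply]
    tauto
  -- the span of the pairs
  set SB : Submodule ℂ (A μ) := Submodule.span ℂ (Bset μ m) with hSB
  have pair_mem_SB : ∀ s : ℕ × ℕ × ℕ, Good m s → pairA μ s ∈ SB := fun s hs =>
    Submodule.subset_span ⟨s, hs, rfl⟩
  -- SB is closed under multiplication
  have SB_mul : ∀ x ∈ SB, ∀ y ∈ SB, x * y ∈ SB := by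
    intro x hx y hy
    induction hx using Submodule.span_induction with
    | mem a ha =>
      induction hy using Submodule.span_induction with
      | mem b hb =>
        obtain ⟨⟨p, q, k⟩, ⟨⟨r, hr⟩, hd⟩, rfl⟩ := ha
        obtain ⟨⟨p', q', k'⟩, ⟨⟨r', hr'⟩, hd'⟩, rfl⟩ := hb
        simp only at hr hr'
        have hk2 : k = 2 * r := by omega
        have hk2' : k' = 2 * r' := by omega
        subst hk2 hk2'
        simp only at hd hd'
        rw [pairA_mul]
        refine SB.smul_mem _ (SB.add_mem ?_ ?_)
        · refine pair_mem_SB _ ⟨⟨r + r', by ring⟩, ?_⟩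
          have : ((p:ℤ) + p') - ((q:ℤ) + q') = ((p:ℤ) - q) + ((p':ℤ) - q') := by ring
          simp only
          push_cast
          rw [this]
          exact dvd_add hd hd'
        · refine pair_mem_SB _ ⟨⟨r + r', by ring⟩, ?_⟩
          have : ((p:ℤ) + q') - ((q:ℤ) + p') = ((p:ℤ) - q) - ((p':ℤ) - q') := by ring
          simp only
          push_cast
          rw [this]
          exact dvd_sub hd hd'
      | zero => rw [mul_zero]; exact SB.zero_mem
      | add b c _ _ ihb ihc => rw [mul_add]; exact SB.add_mem ihb ihc
      | smul c b _ ihb => rw [mul_smul_comm]; exact SB.smul_mem c ihb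
    | zero => rw [zero_mul]; exact SB.zero_mem
    | add a b _ _ iha ihb => rw [add_mul]; exact SB.add_mem iha ihb
    | smul c a _ iha => rw [smul_mul_assoc]; exact SB.smul_mem c iha
  have one_mem_SB : (1 : A μ) ∈ SB := by
    have h : pairA μ (0,0,0) = (2:ℂ) • (1 : A μ) := by
      simp [pairA, mono, sw, two_smul]
    have := pair_mem_SB (0,0,0) ⟨⟨0, rfl⟩, by simp⟩
    rw [h] at this
    have h2 := SB.smul_mem ((2:ℂ)⁻¹) this
    rwa [smul_smul, inv_mul_cancel₀ (by norm_num : (2:ℂ) ≠ 0), one_smul] at h2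
  -- generators lie in SB
  have two_ne : (2:ℂ) ≠ 0 := by norm_num
  have huv_SB : u μ * v μ ∈ SB := by
    have h : pairA μ (1,1,0) = (2:ℂ) • (u μ * v μ) := by
      simp [pairA, mono, sw, two_smul]
    have hp := pair_mem_SB (1,1,0) ⟨⟨0, rfl⟩, by simp⟩
    rw [h] at hp
    have h2 := SB.smul_mem ((2:ℂ)⁻¹) hp
    rwa [smul_smul, inv_mul_cancel₀ two_ne, one_smul] at h2
  have humvm_SB : u μ ^ m + v μ ^ m ∈ SB := by
    have h : pairA μ (m,0,0) = u μ ^ m + v μ ^ m := by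
      simp [pairA, mono, sw]
    have hp := pair_mem_SB (m,0,0) ⟨⟨0, rfl⟩, by simp⟩
    rwa [h] at hp
  have ht2_SB : t μ ^ 2 ∈ SB := by
    have h : pairA μ (0,0,2) = (2:ℂ) • (t μ ^ 2) := by
      simp [pairA, mono, sw, two_smul]
    have hp := pair_mem_SB (0,0,2) ⟨⟨1, rfl⟩, by simp⟩
    rw [h] at hp
    have h2 := SB.smul_mem ((2:ℂ)⁻¹) hp
    rwa [smul_smul, inv_mul_cancel₀ two_ne, one_smul] at h2
  -- adjoin ⊆ SB
  have hAdjSB : (Adj μ m : Set (A μ)) ⊆ (SB : Set (A μ)) := by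
    have hle : Adj μ m ≤ SB.toSubalgebra one_mem_SB (fun x y hx hy => SB_mul x hx y hy) := by
      apply Algebra.adjoin_le
      intro x hx
      simp only [Set.mem_insert_iff, Set.mem_singleton_iff] at hx
      rcases hx with rfl | rfl | rfl
      · exact huv_SB
      · exact humvm_SB
      · exact ht2_SB
    intro x hx
    exact (Submodule.mem_toSubalgebra).1 (hle hx)
  -- SB ⊆ K
  have hSBK : SB ≤ K := by
    rw [hSB]
    apply Submodule.span_le.2
    rintro x ⟨s, hs, rfl⟩
    rw [SetLike.mem_coe, memK]
    exact pair_fixed s hs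
  -- SB ⊆ Adj
  have hSBAdj : (SB : Set (A μ)) ⊆ (Adj μ m : Set (A μ)) := by
    rw [hSB]
    have : Submodule.span ℂ (Bset μ m) ≤ Subalgebra.toSubmodule (Adj μ m) := by
      apply Submodule.span_le.2
      rintro x ⟨s, hs, rfl⟩
      exact pair_mem_adjoin μ m hm0 hs
    intro x hx
    exact this hx
  -- the extensionality argument
  ext F
  simp only [Set.mem_setOf_eq, SetLike.mem_coe]
  constructor
  · rintro ⟨hτF, hSpF, hSmF⟩
    set f := ψ μ F with hf
    have hFθ : F = θ μ f := (θ_ψ_apply μ F).symm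
    -- condition from τ
    have hτrep : ψ μ (τ F) =
        f.sum fun s c => (((-1:ℂ)) ^ s.2.2 * c) • Finsupp.single s 1 := by
      conv_lhs => rw [hFθ, θ_apply]
      rw [map_finsuppSum, map_finsuppSum]
      refine Finsupp.sum_congr fun s _ => ?_
      rw [map_smul, τ_mono, map_smul, map_smul, ψ_mono, smul_smul, mul_comm]
    have hτc : ∀ s0, ((-1:ℂ)) ^ s0.2.2 * f s0 = f s0 := by
      intro s0
      have h1 : ψ μ (τ F) = f := by rw [hτF]
      rw [hτrep] at h1
      have h2 := congrArg (fun g : N => g s0) h1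
      have h3 := sum_single_eval f (fun s => ((-1:ℂ)) ^ s.2.2) s0
      exact h3.symm.trans h2
    have hOdd : ∀ s : ℕ × ℕ × ℕ, Odd s.2.2 → f s = 0 := by
      intro s hodd
      have h1 := hτc s
      rw [hodd.neg_one_pow, neg_one_mul] at h1
      have h2 : (2:ℂ) * f s = 0 := by linear_combination - h1
      exact (mul_eq_zero.1 h2).resolve_left two_ne
    have hEv : ∀ s ∈ f.support, ∃ r, s.2.2 = 2 * r := by
      intro s hs
      rcases Nat.even_or_odd s.2.2 with he | ho
      · obtain ⟨r, hr⟩ := he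
        exact ⟨r, by omega⟩
      · exact absurd (hOdd s ho) (Finsupp.mem_support_iff.1 hs)
    -- generic ψ computation
    have ψsw : ∀ g : (ℕ × ℕ × ℕ) → ℂ,
        ψ μ (f.sum fun s c => (g s * c) • mono μ (sw s)) =
          f.sum fun s c => (g s * c) • Finsupp.single (sw s) 1 := by
      intro g
      rw [map_finsuppSum]
      exact Finsupp.sum_congr fun s _ => by rw [map_smul, ψ_mono]
    -- condition from Sp
    have hSprep : Sp F = f.sum fun s c => ((1:ℂ) * c) • mono μ (sw s) := by
      conv_lhs => rw [hFθ, θ_apply]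
      rw [map_finsuppSum]
      refine Finsupp.sum_congr fun s hs => ?_
      rw [map_smul, one_mul]
      congr 1
      obtain ⟨p, q, k⟩ := s
      obtain ⟨r, hr⟩ := hEv _ hs
      simp only at hr
      subst hr
      exact Sp_mono p q r
    have hC2 : ∀ s0, f (sw s0) = f s0 := by
      intro s0
      have h1 : ψ μ (Sp F) = f := by rw [hSpF]
      rw [hSprep, ψsw] at h1
      have h2 := congrArg (fun g : N => g s0) h1
      have h3 := sum_single_eval_sw f (fun _ => (1:ℂ)) s0
      rw [one_mul] at h3
      exact h3.symm.trans h2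
    -- condition from Sm
    have hSmrep : Sm F = f.sum fun s c =>
        (lam ^ ((i:ℤ) * ((s.1:ℤ) - (s.2.1:ℤ))) * c) • mono μ (sw s) := by
      conv_lhs => rw [hFθ, θ_apply]
      rw [map_finsuppSum]
      refine Finsupp.sum_congr fun s hs => ?_
      rw [map_smul]
      obtain ⟨p, q, k⟩ := s
      obtain ⟨r, hr⟩ := hEv _ hs
      simp only at hr
      subst hr
      rw [Sm_mono p q r, smul_smul, mul_comm]
      rfl
    have hC3 : ∀ s0 ∈ f.support, (m:ℤ) ∣ (s0.1:ℤ) - (s0.2.1:ℤ) := by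
      intro s0 hs0
      have h1 : ψ μ (Sm F) = f := by rw [hSmF]
      rw [hSmrep, ψsw] at h1
      have h2 := congrArg (fun g : N => g s0) h1
      have h3 := sum_single_eval_sw f
        (fun s => lam ^ ((i:ℤ) * ((s.1:ℤ) - (s.2.1:ℤ)))) s0
      have h4 := h3.symm.trans h2
      rw [hC2 s0] at h4
      have hne := Finsupp.mem_support_iff.1 hs0
      have h5 : lam ^ ((i:ℤ) * (((sw s0).1:ℤ) - ((sw s0).2.1:ℤ))) = 1 := by
        refine mul_right_cancel₀ hne ?_
        rw [one_mul]
        exact h4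
      have h6 : (m:ℤ) ∣ (i:ℤ) * (((sw s0).1:ℤ) - ((sw s0).2.1:ℤ)) := (hlam1 _).1 h5
      have hco : IsCoprime (m:ℤ) (i:ℤ) := by
        rw [Int.isCoprime_iff_gcd_eq_one]
        rw [Int.gcd_natCast_natCast, Nat.gcd_comm]
        exact hcop
      have h7 : (m:ℤ) ∣ ((sw s0).1:ℤ) - ((sw s0).2.1:ℤ) := hco.dvd_of_dvd_mul_left h6
      have h8 : ((sw s0).1:ℤ) - ((sw s0).2.1:ℤ) = -(((s0.1:ℤ)) - (s0.2.1:ℤ)) := by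
        simp [sw]
      rw [h8] at h7
      simpa using h7.neg_right
    -- assemble: 2 • F is a sum of good pairs
    have hsum2 : (2:ℂ) • F = f.sum fun s c => c • pairA μ s := by
      have e1 : (f.sum fun s c => c • pairA μ s) =
          (f.sum fun s c => c • mono μ s) + f.sum fun s c => c • mono μ (sw s) := by
        rw [← Finsupp.sum_add]
        exact Finsupp.sum_congr fun s _ => by rw [pairA, smul_add]
      have e2 : (f.sum fun s c => c • mono μ (sw s)) = f.sum fun s c => c • mono μ s := by
        rw [Finsupp.sum, Finsupp.sum]
        refine Finset.sum_equiv ⟨sw, sw, sw_sw, sw_sw⟩ (fun s => ?_) (fun s hs => ?_)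
        · simp only [Finsupp.mem_support_iff, Equiv.coe_fn_mk]
          rw [hC2 s]
        · simp only [Equiv.coe_fn_mk]
          rw [hC2 s]
      rw [e1, e2, two_smul]
      conv_lhs => rw [hFθ, θ_apply]
    have h2F : (2:ℂ) • F ∈ Adj μ m := by
      rw [hsum2, Finsupp.sum]
      refine sum_mem fun s hs => ?_
      refine Subalgebra.smul_mem _ ?_ _
      refine pair_mem_adjoin μ m hm0 ⟨?_, hC3 s hs⟩
      obtain ⟨r, hr⟩ := hEv s hs
      exact ⟨r, by omega⟩
    have hfin := Subalgebra.smul_mem (Adj μ m) h2F ((2:ℂ)⁻¹)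
    rwa [smul_smul, inv_mul_cancel₀ two_ne, one_smul] at hfin
  · intro hF
    exact (memK F).1 (hSBK (hAdjSB hF))


end
end

section
/- Let m ≥ 1 and let c ∈ ℂ satisfy c^m = −1. Let A = ℂ⟨u,v⟩/(u² − c·v²). Then u² is central in A, the elements u² and (uv)^m − (vu)^m commute, and they are algebraically independent over ℂ: the ℂ-algebra homomorphism from the polynomial ring ℂ[X,Y] to A sending X to u² and Y to (uv)^m − (vu)^m is injective. -/
/-! Algebraic independence of `u²` and `(uv)^m - (vu)^m` in `ℂ⟨u,v⟩/(u² - c v²)`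
where `c^m = -1` (key step of Theorem 4.5 of Ferraro–Kirkman–Moore–Won). -/

noncomputable section

open FreeAlgebra

/-- The relation `u² = c • v²` on `ℂ⟨u,v⟩`, i.e. the quotient by the two-sided
ideal generated by `u² - c v²`. -/
inductive Stmt19.Rel (c : ℂ) : FreeAlgebra ℂ (Fin 2) → FreeAlgebra ℂ (Fin 2) → Prop
  | main : Stmt19.Rel c (ι ℂ 0 * ι ℂ 0) (c • (ι ℂ 1 * ι ℂ 1))

/-- `A = ℂ⟨u,v⟩/(u² - c v²)`. -/
abbrev Stmt19.A (c : ℂ) := RingQuot (Stmt19.Rel c)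

def Stmt19.u (c : ℂ) : Stmt19.A c := RingQuot.mkAlgHom ℂ (Stmt19.Rel c) (ι ℂ 0)
def Stmt19.v (c : ℂ) : Stmt19.A c := RingQuot.mkAlgHom ℂ (Stmt19.Rel c) (ι ℂ 1)

/-! ### Auxiliary lemmas -/

open MvPolynomial

section Stmt19Aux

lemma stmt19_arith {m i j k i₀ j₀ : ℕ} (hm : 1 ≤ m) (hk : k ≤ j) (hj : j ≤ j₀)
    (h1 : i + 2*m*k = i₀ + 2*m*j₀) (h2 : i + 2*m*(j-k) = i₀) : i = i₀ ∧ j = j₀ ∧ k = j := by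
  have hd := mul_add (2*m) (j-k) j₀
  have h4 : k = (j-k) + j₀ := Nat.eq_of_mul_eq_mul_left (show 0 < 2*m by omega) (by omega)
  have h0 : j - k = 0 := by omega
  rw [h0, mul_zero] at h2
  omega

lemma stmt19_fs_eq {a b a' b' : ℕ} :
    (Finsupp.single (0:Fin 2) a + Finsupp.single 1 b = Finsupp.single 0 a' + Finsupp.single 1 b')
      ↔ (a = a' ∧ b = b') := by
  constructor
  · intro h
    constructor
    · have := DFunLike.congr_fun h 0; simpa [Finsupp.single_apply] using this
    · have := DFunLike.congr_fun h 1; simpa [Finsupp.single_apply] using this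
  · rintro ⟨rfl, rfl⟩; rfl

lemma stmt19_coeff_term (m : ℕ) (hm : 1 ≤ m) (γ : ℂ) (i j i₀ j₀ : ℕ) (hj : j ≤ j₀) :
    coeff (Finsupp.single (0:Fin 2) (i₀ + 2*m*j₀) + Finsupp.single 1 i₀)
      ((γ • (X 0 * X 1)) ^ i * (X 0 ^ (2*m) - X 1 ^ (2*m)) ^ j)
    = if i = i₀ ∧ j = j₀ then γ ^ i₀ else 0 := by
  have hterm : ∀ k : ℕ, (X 0 * X 1 : MvPolynomial (Fin 2) ℂ)^i *
      ((-1)^(k+j) * (X 0^(2*m))^k * (X 1^(2*m))^(j-k) * (j.choose k : MvPolynomial (Fin 2) ℂ))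
      = C ((-1)^(k+j) * (j.choose k : ℂ)) * (X 0^(i + 2*m*k) * X 1^(i + 2*m*(j-k))) := by
    intro k
    rw [map_mul, map_pow, map_neg, map_one, map_natCast]
    ring
  rw [smul_pow, sub_pow, smul_mul_assoc, Finset.mul_sum, coeff_smul, coeff_sum]
  simp only [hterm]
  simp only [coeff_C_mul, X_pow_eq_monomial, monomial_mul, mul_one, coeff_monomial,
    stmt19_fs_eq]
  by_cases h : i = i₀ ∧ j = j₀
  · obtain ⟨rfl, rfl⟩ := h
    rw [if_pos ⟨rfl, rfl⟩, Finset.sum_eq_single j]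
    · have : ((-1:ℂ))^(j+j) = 1 := Even.neg_one_pow ⟨j, rfl⟩
      simp [this, Nat.choose_self, smul_eq_mul]
    · intro k hk hkj
      rw [if_neg, mul_zero]
      rintro ⟨hc1, hc2⟩
      exact hkj (stmt19_arith hm (by simpa [Nat.lt_succ_iff] using hk) le_rfl hc1 hc2).2.2
    · intro hno; exact absurd (Finset.self_mem_range_succ j) hno
  · rw [if_neg h]
    have hz : ∀ k ∈ Finset.range (j+1),
        ((-1:ℂ))^(k+j) * (j.choose k : ℂ) *
          (if i + 2*m*k = i₀ + 2*m*j₀ ∧ i + 2*m*(j-k) = i₀ then (1:ℂ) else 0) = 0 := by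
      intro k hk
      rw [if_neg, mul_zero]
      rintro ⟨hc1, hc2⟩
      obtain ⟨h1, h2, _⟩ := stmt19_arith hm (by simpa [Nat.lt_succ_iff] using hk) hj hc1 hc2
      exact h ⟨h1, h2⟩
    rw [Finset.sum_eq_zero hz, smul_zero]

lemma stmt19_finsupp_ext {d d' : Fin 2 →₀ ℕ} (h0 : d 0 = d' 0) (h1 : d 1 = d' 1) : d = d' := by
  ext a
  fin_cases a <;> assumption

lemma stmt19_inj (m : ℕ) (hm : 1 ≤ m) (γ : ℂ) (hγ : γ ≠ 0) :
    Function.Injective (aeval (R := ℂ)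
      ![γ • (X 0 * X 1), X 0 ^ (2*m) - X 1 ^ (2*m)] :
        MvPolynomial (Fin 2) ℂ →ₐ[ℂ] MvPolynomial (Fin 2) ℂ) := by
  set g : Fin 2 → MvPolynomial (Fin 2) ℂ := ![γ • (X 0 * X 1), X 0 ^ (2*m) - X 1 ^ (2*m)] with hg
  have h0 : ∀ P : MvPolynomial (Fin 2) ℂ, aeval g P = 0 → P = 0 := by
    intro P hP
    by_contra hne
    obtain ⟨d₀, hd₀, hmax⟩ := Finset.exists_max_image P.support (fun d => d 1)
      (support_nonempty.mpr hne)
    have hco : coeff (Finsupp.single (0:Fin 2) (d₀ 0 + 2*m*(d₀ 1)) + Finsupp.single 1 (d₀ 0))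
        (aeval g P) = coeff d₀ P * γ ^ (d₀ 0) := by
      rw [aeval_def, eval₂_eq', coeff_sum]
      have hsingle : ∀ d ∈ P.support, d ≠ d₀ →
          coeff (Finsupp.single (0:Fin 2) (d₀ 0 + 2*m*(d₀ 1)) + Finsupp.single 1 (d₀ 0))
            (algebraMap ℂ _ (coeff d P) * ∏ i, g i ^ d i) = 0 := by
        intro d hd hne'
        rw [Fin.prod_univ_two, hg]
        simp only [Matrix.cons_val_zero, Matrix.cons_val_one, Matrix.head_cons]
        rw [algebraMap_eq, coeff_C_mul,
          stmt19_coeff_term m hm γ (d 0) (d 1) (d₀ 0) (d₀ 1) (hmax d hd)]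
        rw [if_neg, mul_zero]
        rintro ⟨e0, e1⟩
        exact hne' (stmt19_finsupp_ext e0 e1)
      rw [Finset.sum_eq_single d₀ hsingle (fun hno => absurd hd₀ hno)]
      rw [Fin.prod_univ_two, hg]
      simp only [Matrix.cons_val_zero, Matrix.cons_val_one, Matrix.head_cons]
      rw [algebraMap_eq, coeff_C_mul,
        stmt19_coeff_term m hm γ (d₀ 0) (d₀ 1) (d₀ 0) (d₀ 1) le_rfl, if_pos ⟨rfl, rfl⟩]
    rw [hP, coeff_zero] at hco
    exact (mem_support_iff.mp hd₀) (by
      rcases mul_eq_zero.mp hco.symm with h | h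
      · exact h
      · exact absurd h (pow_ne_zero _ hγ))
  intro a b hab
  have : a - b = 0 := h0 (a - b) (by rw [map_sub, hab, sub_self])
  exact sub_eq_zero.mp this

/-- The polynomial ring `ℂ[x,y]`. -/
abbrev Stmt19RP := MvPolynomial (Fin 2) ℂ
/-- `2 × 2` matrices over `ℂ[x,y]`. -/
abbrev Stmt19MR := Matrix (Fin 2) (Fin 2) Stmt19RP

def stmt19_U (γ : ℂ) : Stmt19MR := !![0, X 0; γ • X 1, 0]
def stmt19_V (γ : ℂ) : Stmt19MR := !![0, γ⁻¹ • X 1; X 0, 0]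

lemma stmt19_UU (γ : ℂ) :
    stmt19_U γ * stmt19_U γ = Matrix.diagonal ![γ • (X 0 * X 1), γ • (X 0 * X 1)] := by
  refine Matrix.ext fun i j => ?_
  unfold stmt19_U
  fin_cases i <;> fin_cases j <;>
    simp [Matrix.mul_apply, Fin.sum_univ_two, Matrix.diagonal, smul_eq_C_mul] <;> ring

lemma stmt19_UV (γ : ℂ) (hγ : γ ≠ 0) :
    stmt19_U γ * stmt19_V γ = Matrix.diagonal ![X 0 ^ 2, X 1 ^ 2] := by
  have hs : (C γ : Stmt19RP) * C γ⁻¹ = 1 := by rw [← map_mul, mul_inv_cancel₀ hγ, map_one]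
  refine Matrix.ext fun i j => ?_
  unfold stmt19_U stmt19_V
  fin_cases i <;> fin_cases j <;>
    simp [Matrix.mul_apply, Fin.sum_univ_two, Matrix.diagonal, smul_eq_C_mul] <;>
    first
      | ring1
      | linear_combination (X 1 * X 1 : Stmt19RP) * hs

lemma stmt19_VU (γ : ℂ) (hγ : γ ≠ 0) :
    stmt19_V γ * stmt19_U γ = Matrix.diagonal ![X 1 ^ 2, X 0 ^ 2] := by
  have hs : (C γ : Stmt19RP) * C γ⁻¹ = 1 := by rw [← map_mul, mul_inv_cancel₀ hγ, map_one]
  refine Matrix.ext fun i j => ?_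
  unfold stmt19_U stmt19_V
  fin_cases i <;> fin_cases j <;>
    simp [Matrix.mul_apply, Fin.sum_univ_two, Matrix.diagonal, smul_eq_C_mul] <;>
    first
      | ring1
      | linear_combination (X 1 * X 1 : Stmt19RP) * hs

lemma stmt19_rel_matrix (c γ : ℂ) (hγ : γ ≠ 0) (hγ2 : γ ^ 2 = c) :
    stmt19_U γ * stmt19_U γ = c • (stmt19_V γ * stmt19_V γ) := by
  have hs : (C c : Stmt19RP) * C γ⁻¹ = C γ := by
    rw [← map_mul, ← hγ2, sq, mul_assoc, mul_inv_cancel₀ hγ, mul_one]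
  refine Matrix.ext fun i j => ?_
  unfold stmt19_U stmt19_V
  fin_cases i <;> fin_cases j <;>
    simp [Matrix.mul_apply, Fin.sum_univ_two, smul_eq_C_mul] <;>
    first
      | ring1
      | linear_combination (-(X 0 * X 1) : Stmt19RP) * hs

/-- The representation of the free algebra. -/
def stmt19_ψ0 (γ : ℂ) : FreeAlgebra ℂ (Fin 2) →ₐ[ℂ] Stmt19MR :=
  FreeAlgebra.lift ℂ ![stmt19_U γ, stmt19_V γ]

lemma stmt19_rel_holds (c γ : ℂ) (hγ : γ ≠ 0) (hγ2 : γ ^ 2 = c) :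
    ∀ ⦃x y⦄, Stmt19.Rel c x y → stmt19_ψ0 γ x = stmt19_ψ0 γ y := by
  rintro _ _ ⟨⟩
  unfold stmt19_ψ0
  simp only [map_mul, map_smul, FreeAlgebra.lift_ι_apply, Matrix.cons_val_zero,
    Matrix.cons_val_one, Matrix.head_cons]
  exact stmt19_rel_matrix c γ hγ hγ2

/-- The induced representation of `A`. -/
def stmt19_ψ (c γ : ℂ) (hγ : γ ≠ 0) (hγ2 : γ ^ 2 = c) : Stmt19.A c →ₐ[ℂ] Stmt19MR :=
  RingQuot.liftAlgHom ℂ ⟨stmt19_ψ0 γ, stmt19_rel_holds c γ hγ hγ2⟩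

lemma stmt19_ψ_u (c γ : ℂ) (hγ : γ ≠ 0) (hγ2 : γ ^ 2 = c) :
    stmt19_ψ c γ hγ hγ2 (Stmt19.u c) = stmt19_U γ := by
  unfold stmt19_ψ Stmt19.u
  rw [RingQuot.liftAlgHom_mkAlgHom_apply]
  unfold stmt19_ψ0
  simp [FreeAlgebra.lift_ι_apply]

lemma stmt19_ψ_v (c γ : ℂ) (hγ : γ ≠ 0) (hγ2 : γ ^ 2 = c) :
    stmt19_ψ c γ hγ hγ2 (Stmt19.v c) = stmt19_V γ := by
  unfold stmt19_ψ Stmt19.v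
  rw [RingQuot.liftAlgHom_mkAlgHom_apply]
  unfold stmt19_ψ0
  simp [FreeAlgebra.lift_ι_apply]

end Stmt19Aux

open Stmt19 MvPolynomial in
/-- `u²` is central, it commutes with `(uv)^m - (vu)^m`, and the two elements are
algebraically independent over `ℂ`: any ℂ-algebra homomorphism from the polynomial
ring `ℂ[X,Y]` into `A` sending `X` to `u²` and `Y` to `(uv)^m - (vu)^m` is injective. -/
theorem stmt_19 (m : ℕ) (hm : 1 ≤ m) (c : ℂ) (hc : c ^ m = -1) :
    (∀ a : A c, u c ^ 2 * a = a * u c ^ 2) ∧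
    (u c ^ 2 * ((u c * v c) ^ m - (v c * u c) ^ m) =
      ((u c * v c) ^ m - (v c * u c) ^ m) * u c ^ 2) ∧
    (∀ φ : MvPolynomial (Fin 2) ℂ →ₐ[ℂ] A c,
      φ (X 0) = u c ^ 2 → φ (X 1) = (u c * v c) ^ m - (v c * u c) ^ m →
        Function.Injective φ) := by
  have hc0 : c ≠ 0 := by
    intro h
    rw [h, zero_pow (by omega : m ≠ 0)] at hc
    exact absurd hc.symm (by norm_num)
  obtain ⟨γ, hγ2⟩ := IsAlgClosed.exists_pow_nat_eq c (n := 2) (by norm_num)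
  have hγ : γ ≠ 0 := by
    intro h
    rw [h] at hγ2
    simp at hγ2
    exact hc0 hγ2.symm
  -- the defining relation in `A`
  have hrelA : u c * u c = c • (v c * v c) := by
    rw [Stmt19.u, Stmt19.v, ← map_mul, ← map_mul, ← map_smul]
    exact RingQuot.mkAlgHom_rel ℂ Stmt19.Rel.main
  -- centrality of u²
  have hcent : ∀ a : A c, u c ^ 2 * a = a * u c ^ 2 := by
    intro a
    obtain ⟨b, rfl⟩ := RingQuot.mkAlgHom_surjective ℂ (Stmt19.Rel c) a
    induction b using FreeAlgebra.induction with
    | grade0 r =>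
      rw [AlgHom.commutes]
      exact (Algebra.commutes r _).symm
    | grade1 i =>
      fin_cases i
      · show u c ^ 2 * u c = u c * u c ^ 2
        rw [sq, mul_assoc]
      · show u c ^ 2 * v c = v c * u c ^ 2
        rw [sq, hrelA, smul_mul_assoc, mul_assoc]
        exact (mul_smul_comm _ _ _).symm
    | mul x y hx hy =>
      rw [map_mul, ← mul_assoc, hx, mul_assoc, hy, mul_assoc]
    | add x y hx hy =>
      rw [map_add, mul_add, hx, hy, add_mul]
  refine ⟨hcent, hcent _, ?_⟩
  intro φ hφ0 hφ1
  -- images of u² and (uv)^m - (vu)^m under the representation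
  have hU2 : stmt19_ψ c γ hγ hγ2 (u c ^ 2)
      = Matrix.diagonal ![γ • (X 0 * X 1), γ • (X 0 * X 1)] := by
    rw [map_pow, stmt19_ψ_u, sq, stmt19_UU]
  have hB : stmt19_ψ c γ hγ hγ2 ((u c * v c) ^ m - (v c * u c) ^ m)
      = Matrix.diagonal ![X 0 ^ (2*m) - X 1 ^ (2*m), -(X 0 ^ (2*m) - X 1 ^ (2*m))] := by
    rw [map_sub, map_pow, map_pow, map_mul, map_mul, stmt19_ψ_u, stmt19_ψ_v,
      stmt19_UV γ hγ, stmt19_VU γ hγ, Matrix.diagonal_pow, Matrix.diagonal_pow,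
      Matrix.diagonal_sub]
    refine Matrix.ext fun i j => ?_
    fin_cases i <;> fin_cases j <;>
      simp [Matrix.diagonal, ← pow_mul, mul_comm 2 m]
  -- identify ψ ∘ φ with the diagonal of two polynomial evaluations
  have hcomp : (stmt19_ψ c γ hγ hγ2).comp φ
      = (Matrix.diagonalAlgHom (R := ℂ)).comp
          (Pi.algHom ℂ _
            ![(aeval ![γ • (X 0 * X 1), X 0 ^ (2*m) - X 1 ^ (2*m)] :
                MvPolynomial (Fin 2) ℂ →ₐ[ℂ] _),
              aeval ![γ • (X 0 * X 1), -(X 0 ^ (2*m) - X 1 ^ (2*m))]]) := by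
    refine MvPolynomial.algHom_ext (Fin.forall_fin_two.mpr ⟨?_, ?_⟩)
    · rw [AlgHom.comp_apply, AlgHom.comp_apply, hφ0, hU2]
      refine Matrix.ext fun i j => ?_
      fin_cases i <;> fin_cases j <;>
        simp [Matrix.diagonalAlgHom_apply, Pi.algHom_apply, Matrix.diagonal, bind₁_X_right]
    · rw [AlgHom.comp_apply, AlgHom.comp_apply, hφ1, hB]
      refine Matrix.ext fun i j => ?_
      fin_cases i <;> fin_cases j <;>
        simp [Matrix.diagonalAlgHom_apply, Pi.algHom_apply, Matrix.diagonal, bind₁_X_right]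
  -- conclude injectivity
  intro P Q hPQ
  have h1 : (stmt19_ψ c γ hγ hγ2).comp φ P = (stmt19_ψ c γ hγ hγ2).comp φ Q := by
    simp only [AlgHom.comp_apply, hPQ]
  rw [hcomp] at h1
  have h2 := Matrix.diagonal_injective (by simpa only [AlgHom.comp_apply, Matrix.diagonalAlgHom_apply] using h1)
  have h3 := congrFun h2 0
  simp only [Pi.algHom_apply, Matrix.cons_val_zero] at h3
  exact stmt19_inj m hm γ hγ h3

end
end
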